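/- Let ρ ≪ π be a Gibbs probability measure over treatment rules with cost B(ρ) = E_Q[δ_c(X) f_{G,ρ}(X)], and assume B(ρ) > E_Q[δ_c(X)·1{δ_c(X)<0}] and Q(δ_y(X) = η_{B(ρ)} δ_c(X)) = 0, so the optimal rule for budget B(ρ) is f*(x) = 1{δ_y(x) − η_{B(ρ)} δ_c(x) > 0} with η_{B(ρ)} ≥ 0 and, if η_{B(ρ)} > 0, K(f*) = B(ρ). Define L(f) = E_Q[(δ_y(X) − η_{B(ρ)} δ_c(X))(f*(X) − f(X))] and R(f) = W(f*) − W(f). Then L(f_{mv,ρ}) ≤ 2·R(f_{G,ρ}), where f_{G,ρ}(x) = ∫ f_θ(x) dρ(θ) and f_{mv,ρ}(x) = 1{f_{G,ρ}(x) > 1/2}. -/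

import Mathlib

open MeasureTheory

lemma aux_mul_bdd {𝓧 : Type*} [MeasurableSpace 𝓧] {μ : Measure 𝓧}
    {h b : 𝓧 → ℝ} (hh : Integrable h μ) (hb : AEStronglyMeasurable b μ)
    (C : ℝ) (hC : ∀ x, ‖b x‖ ≤ C) :
    Integrable (fun x => h x * b x) μ := by
  have := hh.bdd_mul hb (Filter.Eventually.of_forall hC)
  simpa [mul_comm] using this

theorem stmt15 {Θ 𝓧 : Type*} [MeasurableSpace Θ] [MeasurableSpace 𝓧]
    (μ : Measure 𝓧) [IsProbabilityMeasure μ]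
    (ρ : Measure Θ) [IsProbabilityMeasure ρ]
    (δy δc : 𝓧 → ℝ) (hym : Measurable δy) (hcm : Measurable δc)
    (hy : Integrable δy μ) (hc : Integrable δc μ)
    (fθ : Θ → 𝓧 → ℝ) (hfθ : ∀ θ x, fθ θ x = 0 ∨ fθ θ x = 1)
    (fG : 𝓧 → ℝ) (hfG : ∀ x, fG x = ∫ θ, fθ θ x ∂ρ) (hGm : Measurable fG)
    (η : ℝ) (hη : 0 ≤ η)
    (hBlow : (∫ x, (if δc x < 0 then δc x else 0) ∂μ) < ∫ x, δc x * fG x ∂μ)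
    (htie : μ {x | δy x = η * δc x} = 0)
    (hcase : η = 0 ∨ (0 < η ∧
      (∫ x, δc x * (if η * δc x < δy x then (1:ℝ) else 0) ∂μ) = ∫ x, δc x * fG x ∂μ)) :
    (∫ x, (δy x - η * δc x) *
        ((if η * δc x < δy x then (1:ℝ) else 0)
          - (if (1:ℝ)/2 < fG x then (1:ℝ) else 0)) ∂μ)
      ≤ 2 * ((∫ x, δy x * (if η * δc x < δy x then (1:ℝ) else 0) ∂μ)
          - ∫ x, δy x * fG x ∂μ) := by
  set F : 𝓧 → ℝ := fun x => if η * δc x < δy x then (1:ℝ) else 0 with hF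
  set M : 𝓧 → ℝ := fun x => if (1:ℝ)/2 < fG x then (1:ℝ) else 0 with hM
  set g : 𝓧 → ℝ := fun x => δy x - η * δc x with hg
  -- fG bounds
  have hG0 : ∀ x, 0 ≤ fG x := by
    intro x
    rw [hfG x]
    exact integral_nonneg fun θ => by rcases hfθ θ x with h | h <;> simp [h]
  have hG1 : ∀ x, fG x ≤ 1 := by
    intro x
    rw [hfG x]
    calc (∫ θ, fθ θ x ∂ρ) ≤ ∫ _θ, (1:ℝ) ∂ρ := by
          apply integral_mono_of_nonneg
          · filter_upwards with θ
            rcases hfθ θ x with h | h <;> simp [h]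
          · exact integrable_const 1
          · filter_upwards with θ
            rcases hfθ θ x with h | h <;> simp [h]
      _ = 1 := by simp
  -- measurability
  have hFm : Measurable F := by
    apply Measurable.ite (measurableSet_lt (hcm.const_mul η) hym) <;> measurability
  have hMm : Measurable M := by
    apply Measurable.ite (measurableSet_lt measurable_const hGm) <;> measurability
  have hgi : Integrable g μ := hy.sub (hc.const_mul η)
  have hFb : ∀ x, ‖F x‖ ≤ 1 := by
    intro x; rw [hF]; dsimp only; split_ifs <;> simp
  have hMb : ∀ x, ‖M x‖ ≤ 1 := by
    intro x; rw [hM]; dsimp only; split_ifs <;> simp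
  have hGb : ∀ x, ‖fG x‖ ≤ 1 := fun x => by
    rw [Real.norm_eq_abs, abs_le]; exact ⟨by linarith [hG0 x], hG1 x⟩
  have hFMb : ∀ x, ‖F x - M x‖ ≤ 2 := fun x => by
    calc ‖F x - M x‖ ≤ ‖F x‖ + ‖M x‖ := norm_sub_le _ _
      _ ≤ 2 := by linarith [hFb x, hMb x]
  have hFGb : ∀ x, ‖F x - fG x‖ ≤ 2 := fun x => by
    calc ‖F x - fG x‖ ≤ ‖F x‖ + ‖fG x‖ := norm_sub_le _ _
      _ ≤ 2 := by linarith [hFb x, hGb x]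
  -- integrability of products
  have i1 : Integrable (fun x => g x * (F x - M x)) μ :=
    aux_mul_bdd hgi ((hFm.sub hMm).aestronglyMeasurable) 2 hFMb
  have i2 : Integrable (fun x => g x * (F x - fG x)) μ :=
    aux_mul_bdd hgi ((hFm.sub hGm).aestronglyMeasurable) 2 hFGb
  have iyF : Integrable (fun x => δy x * F x) μ :=
    aux_mul_bdd hy hFm.aestronglyMeasurable 1 hFb
  have iyG : Integrable (fun x => δy x * fG x) μ :=
    aux_mul_bdd hy hGm.aestronglyMeasurable 1 hGb
  have icF : Integrable (fun x => δc x * F x) μ :=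
    aux_mul_bdd hc hFm.aestronglyMeasurable 1 hFb
  have icG : Integrable (fun x => δc x * fG x) μ :=
    aux_mul_bdd hc hGm.aestronglyMeasurable 1 hGb
  -- key identity
  have hzero : η * ((∫ x, δc x * F x ∂μ) - ∫ x, δc x * fG x ∂μ) = 0 := by
    rcases hcase with h0 | ⟨_, heq⟩
    · simp [h0]
    · have h2 : (∫ x, δc x * F x ∂μ) = ∫ x, δc x * fG x ∂μ := heq
      rw [h2]; ring
  have hA := integral_sub iyF iyG
  have hB := integral_sub icF icG
  have hC : (∫ x, η * (δc x * F x - δc x * fG x) ∂μ)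
      = η * ∫ x, (δc x * F x - δc x * fG x) ∂μ := integral_const_mul η _
  have key : (∫ x, δy x * F x ∂μ) - (∫ x, δy x * fG x ∂μ)
      = ∫ x, g x * (F x - fG x) ∂μ := by
    have step1 : (∫ x, g x * (F x - fG x) ∂μ)
        = ∫ x, (δy x * F x - δy x * fG x) - η * (δc x * F x - δc x * fG x) ∂μ :=
      integral_congr_ae (Filter.Eventually.of_forall fun x => by rw [hg]; ring)
    have step2 : (∫ x, (δy x * F x - δy x * fG x) - η * (δc x * F x - δc x * fG x) ∂μ)
        = (∫ x, δy x * F x - δy x * fG x ∂μ)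
          - ∫ x, η * (δc x * F x - δc x * fG x) ∂μ :=
      integral_sub (iyF.sub iyG) ((icF.sub icG).const_mul η)
    rw [step1, step2, hA, hC, hB]
    linarith [hzero]
  rw [show 2 * ((∫ x, δy x * F x ∂μ) - ∫ x, δy x * fG x ∂μ)
      = ∫ x, 2 * (g x * (F x - fG x)) ∂μ by rw [key, integral_const_mul]]
  apply integral_mono i1 (i2.const_mul 2)
  intro x
  rw [hF, hM, hg]
  dsimp only
  have h0 := hG0 x
  have h1 := hG1 x
  split_ifs with hA hB hB
  · nlinarith
  · nlinarith
  · nlinarith [not_lt.mp hA]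
  · nlinarith [not_lt.mp hA]
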